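/- For a convex function u : Ω → ℝ on an open convex set Ω ⊂ ℝⁿ that is differentiable almost everywhere, the subdifferential at any point x is the convex hull of limits of gradients: ∂u(x) = Conv({p : there exist x_k ∈ Dom(∇u) with x_k → x and ∇u(x_k) → p}). -/

import Mathlib

open Set Filter Topology MeasureTheory

local notation "⟪" x ", " y "⟫" => (inner ℝ x y : ℝ)

section helpers
variable {n : ℕ}

private lemma inner_gradient_eq' (u : EuclideanSpace ℝ (Fin n) → ℝ)
    (y v : EuclideanSpace ℝ (Fin n)) : ⟪gradient u y, v⟫ = fderiv ℝ u y v := by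
  rw [gradient, InnerProductSpace.toDual_symm_apply]

private lemma grad_mem_subdiff' {Ω : Set (EuclideanSpace ℝ (Fin n))} (hΩc : Convex ℝ Ω)
    {u : EuclideanSpace ℝ (Fin n) → ℝ} (hu : ConvexOn ℝ Ω u)
    {y : EuclideanSpace ℝ (Fin n)} (hy : y ∈ Ω) (hd : DifferentiableAt ℝ u y)
    {z : EuclideanSpace ℝ (Fin n)} (hz : z ∈ Ω) :
    u y + ⟪gradient u y, z - y⟫ ≤ u z := by
  set v := z - y with hv
  have h2 : HasDerivAt (fun t : ℝ => u (y + t • v)) (fderiv ℝ u y v) 0 := by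
    have h1 : HasDerivAt (fun t : ℝ => y + t • v) v 0 := by
      simpa using ((hasDerivAt_id (0 : ℝ)).smul_const v).const_add y
    have h3 : HasFDerivAt u (fderiv ℝ u y) ((fun t : ℝ => y + t • v) 0) := by
      simpa using hd.hasFDerivAt
    exact h3.comp_hasDerivAt 0 h1
  have hslope : ∀ t ∈ Ioc (0:ℝ) 1, slope (fun t : ℝ => u (y + t • v)) 0 t ≤ u z - u y := by
    intro t ht
    have hco := hu.2 hy hz (by linarith [ht.2] : (0:ℝ) ≤ 1 - t) ht.1.le (by ring)
    have heq : (1 - t) • y + t • z = y + t • v := by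
      rw [hv]; module
    rw [heq] at hco
    have : slope (fun t : ℝ => u (y + t • v)) 0 t
        = (u (y + t • v) - u (y + (0:ℝ) • v)) / t := by
      rw [slope_def_field]; ring_nf
    rw [this]
    rw [div_le_iff₀ ht.1]
    have : u (y + (0:ℝ) • v) = u y := by norm_num
    rw [this]
    simp only [smul_eq_mul] at hco
    nlinarith [ht.1]
  have hlim : Tendsto (slope (fun t : ℝ => u (y + t • v)) 0) (𝓝[>] 0)
      (𝓝 (fderiv ℝ u y v)) :=
    (hasDerivAt_iff_tendsto_slope.1 h2).mono_left
      (nhdsWithin_mono _ (fun t ht => ne_of_gt ht))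
  have hle : fderiv ℝ u y v ≤ u z - u y :=
    le_of_tendsto hlim (eventually_of_mem (Ioc_mem_nhdsGT one_pos) hslope)
  rw [inner_gradient_eq']
  linarith

private lemma isCompact_convexHull'' {S : Set (EuclideanSpace ℝ (Fin n))}
    (hS : IsCompact S) : IsCompact (convexHull ℝ S) := by
  classical
  rcases S.eq_empty_or_nonempty with rfl | ⟨s₀, hs₀⟩
  · simpa using isCompact_empty
  set f : (Fin (n+1) → ℝ) × (Fin (n+1) → EuclideanSpace ℝ (Fin n)) → EuclideanSpace ℝ (Fin n) :=
    fun wz => ∑ i, wz.1 i • wz.2 i with hf_def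
  have hf : Continuous f :=
    continuous_finset_sum _ fun i _ =>
      ((continuous_apply i).comp continuous_fst).smul ((continuous_apply i).comp continuous_snd)
  have hcomp : IsCompact ((stdSimplex ℝ (Fin (n+1))) ×ˢ (Set.univ.pi fun _ : Fin (n+1) => S)) :=
    (isCompact_stdSimplex _ _).prod (isCompact_univ_pi fun _ => hS)
  have himg : convexHull ℝ S
      = f '' ((stdSimplex ℝ (Fin (n+1))) ×ˢ (Set.univ.pi fun _ : Fin (n+1) => S)) := by
    apply Subset.antisymm
    · intro xx hxx
      obtain ⟨ι, hfin, z, w, hrange, hindep, hpos, hsum, hx⟩ :=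
        eq_pos_convex_span_of_mem_convexHull hxx
      have hcard : Fintype.card ι ≤ n + 1 := by
        rcases isEmpty_or_nonempty ι with h | h
        · simp [Fintype.card_eq_zero]
        · have h1 := hindep.finrank_vectorSpan_add_one
          have h2 : Module.finrank ℝ (vectorSpan ℝ (Set.range z)) ≤ n := by
            have := Submodule.finrank_le (vectorSpan ℝ (Set.range z))
            simpa using this
          omega
      obtain ⟨g⟩ : Nonempty (ι ↪ Fin (n + 1)) :=
        Function.Embedding.nonempty_of_card_le (by simpa using hcard)
      set w' : Fin (n+1) → ℝ := Function.extend g w 0 with hw'def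
      set z' : Fin (n+1) → EuclideanSpace ℝ (Fin n) := Function.extend g z (fun _ => s₀) with hz'def
      have hw'g : ∀ i, w' (g i) = w i := fun i => g.injective.extend_apply w 0 i
      have hz'g : ∀ i, z' (g i) = z i := fun i => g.injective.extend_apply z _ i
      have hw'0 : ∀ j, j ∉ Finset.univ.image g → w' j = 0 := by
        intro j hj
        have : ¬∃ i, g i = j := by
          rintro ⟨i, rfl⟩; exact hj (Finset.mem_image_of_mem g (Finset.mem_univ i))
        simp [hw'def, Function.extend_apply' _ _ _ this]
      have hsum' : ∀ (F : Fin (n+1) → EuclideanSpace ℝ (Fin n) → ℝ), True := fun _ => trivial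
      refine ⟨(w', z'), ⟨⟨?_, ?_⟩, ?_⟩, ?_⟩
      · intro j
        show 0 ≤ w' j
        by_cases hj : j ∈ Finset.univ.image g
        · obtain ⟨i, -, rfl⟩ := Finset.mem_image.1 hj
          rw [hw'g]; exact (hpos i).le
        · rw [hw'0 j hj]
      · show ∑ j, w' j = 1
        rw [← Finset.sum_subset (Finset.subset_univ (Finset.univ.image g))
          (fun j _ hj => hw'0 j hj)]
        rw [Finset.sum_image (fun a _ b _ h => g.injective h)]
        simpa [hw'g] using hsum
      · intro j _
        show z' j ∈ S
        by_cases hj : ∃ i, g i = j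
        · obtain ⟨i, rfl⟩ := hj
          rw [hz'g]; exact hrange ⟨i, rfl⟩
        · simp only [hz'def, Function.extend_apply' _ _ _ hj]; exact hs₀
      · show ∑ j, w' j • z' j = xx
        rw [← Finset.sum_subset (Finset.subset_univ (Finset.univ.image g))
          (fun j _ hj => by rw [hw'0 j hj, zero_smul])]
        rw [Finset.sum_image (fun a _ b _ h => g.injective h)]
        simp only [hw'g, hz'g]
        exact hx
    · rintro _ ⟨⟨w, z⟩, ⟨hw, hz⟩, rfl⟩
      exact (convex_convexHull ℝ S).sum_mem (fun i _ => hw.1 i) hw.2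
        (fun i _ => subset_convexHull ℝ S (hz i (mem_univ i)))
  rw [himg]
  exact hcomp.image hf

private lemma grad_norm_le' {r Kr : ℝ} (hr : 0 < r) (hKr : 0 ≤ Kr)
    {Ω : Set (EuclideanSpace ℝ (Fin n))}
    {u : EuclideanSpace ℝ (Fin n) → ℝ}
    {x : EuclideanSpace ℝ (Fin n)}
    (hball : Metric.ball x (3*r) ⊆ Ω)
    (hdist : ∀ a ∈ Metric.ball x (3*r), ∀ b ∈ Metric.ball x (3*r),
      dist (u a) (u b) ≤ Kr * dist a b)
    (hgs : ∀ ⦃y⦄, y ∈ Ω → DifferentiableAt ℝ u y → ∀ ⦃z⦄, z ∈ Ω →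
      u y + ⟪gradient u y, z - y⟫ ≤ u z) :
    ∀ y ∈ Metric.ball x (2*r), DifferentiableAt ℝ u y → ‖gradient u y‖ ≤ Kr := by
  intro y hy hd
  set g := gradient u y with hg
  rcases eq_or_ne g 0 with h0 | h0
  · rw [h0]; simpa using hKr
  have hgn : 0 < ‖g‖ := norm_pos_iff.2 h0
  set s : ℝ := r / (2 * ‖g‖) with hs
  have hspos : 0 < s := by positivity
  have hsg : ‖s • g‖ = r / 2 := by
    rw [norm_smul, Real.norm_eq_abs, abs_of_pos hspos, hs]
    field_simp
  have hmem : y + s • g ∈ Metric.ball x (3*r) := by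
    have h1 : dist (y + s • g) y = r / 2 := by
      rw [dist_eq_norm, add_sub_cancel_left, hsg]
    have h2 := dist_triangle (y + s • g) y x
    have h3 : dist y x < 2 * r := by simpa [Metric.mem_ball] using hy
    have : dist (y + s • g) x < 3 * r := by
      rw [h1] at h2; linarith
    simpa [Metric.mem_ball] using this
  have hyΩ : y ∈ Ω := by
    apply hball
    have h3 : dist y x < 2 * r := by simpa [Metric.mem_ball] using hy
    simp only [Metric.mem_ball]
    linarith
  have h1 := hgs hyΩ hd (hball hmem)
  have h2 : ⟪g, (y + s • g) - y⟫ = s * ‖g‖^2 := by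
    rw [add_sub_cancel_left, real_inner_smul_right, real_inner_self_eq_norm_sq]
  have h3 : u (y + s • g) - u y ≤ Kr * (s * ‖g‖) := by
    have := hdist _ hmem y (by
      have : dist y x < 2*r := by simpa [Metric.mem_ball] using hy
      simpa [Metric.mem_ball] using lt_trans this (by linarith))
    have hd2 : dist (y + s • g) y = s * ‖g‖ := by
      rw [dist_eq_norm, add_sub_cancel_left, norm_smul, Real.norm_eq_abs, abs_of_pos hspos]
    rw [hd2] at this
    calc u (y + s • g) - u y ≤ |u (y + s • g) - u y| := le_abs_self _
      _ = dist (u (y + s • g)) (u y) := (Real.dist_eq _ _).symm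
      _ ≤ Kr * (s * ‖g‖) := this
  rw [h2] at h1
  have : s * ‖g‖^2 ≤ Kr * (s * ‖g‖) := by linarith
  have := le_of_mul_le_mul_left (by nlinarith : (s * ‖g‖) * ‖g‖ ≤ (s * ‖g‖) * Kr)
    (by positivity : 0 < s * ‖g‖)
  exact this

private lemma tendsto_aux' (c : ℝ) :
    Tendsto (fun k : ℕ => c / ((k : ℝ) + 1)) atTop (𝓝 0) := by
  have h := tendsto_one_div_add_atTop_nhds_zero_nat.const_mul c
  simpa [div_eq_mul_inv] using h

end helpers

/-- The subdifferential of `u : Ω → ℝ` (relative to the domain `Ω`) at `x`. -/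
def subdiffOn {n : ℕ} (Ω : Set (EuclideanSpace ℝ (Fin n)))
    (u : EuclideanSpace ℝ (Fin n) → ℝ) (x : EuclideanSpace ℝ (Fin n)) :
    Set (EuclideanSpace ℝ (Fin n)) :=
  {p | ∀ y ∈ Ω, u x + (inner ℝ p (y - x) : ℝ) ≤ u y}

set_option maxHeartbeats 2000000 in
/-- The subdifferential of a convex function is the convex hull of limits of
nearby gradients. -/
theorem stmt16 {n : ℕ} (Ω : Set (EuclideanSpace ℝ (Fin n)))
    (hΩo : IsOpen Ω) (hΩc : Convex ℝ Ω)
    (u : EuclideanSpace ℝ (Fin n) → ℝ) (hu : ConvexOn ℝ Ω u)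
    (hdiff : ∀ᵐ y ∂volume, y ∈ Ω → DifferentiableAt ℝ u y)
    (x : EuclideanSpace ℝ (Fin n)) (hx : x ∈ Ω) :
    subdiffOn Ω u x =
      convexHull ℝ
        {p : EuclideanSpace ℝ (Fin n) |
          ∃ xs : ℕ → EuclideanSpace ℝ (Fin n),
            (∀ k, xs k ∈ Ω ∧ DifferentiableAt ℝ u (xs k)) ∧
            Tendsto xs atTop (𝓝 x) ∧
            Tendsto (fun k => gradient u (xs k)) atTop (𝓝 p)} := by
  classical
  set S : Set (EuclideanSpace ℝ (Fin n)) :=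
    {p : EuclideanSpace ℝ (Fin n) |
      ∃ xs : ℕ → EuclideanSpace ℝ (Fin n),
        (∀ k, xs k ∈ Ω ∧ DifferentiableAt ℝ u (xs k)) ∧
        Tendsto xs atTop (𝓝 x) ∧
        Tendsto (fun k => gradient u (xs k)) atTop (𝓝 p)} with hS_def
  have hScont : ContinuousAt u x := (hu.continuousOn hΩo).continuousAt (hΩo.mem_nhds hx)
  -- easy direction
  have hSsub : S ⊆ subdiffOn Ω u x := by
    rintro p ⟨xs, hxs, hxsx, hgr⟩ z hz
    have hk : ∀ k, u (xs k) + ⟪gradient u (xs k), z - xs k⟫ ≤ u z := fun k =>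
      grad_mem_subdiff' hΩc hu (hxs k).1 (hxs k).2 hz
    have h1 : Tendsto (fun k => u (xs k) + ⟪gradient u (xs k), z - xs k⟫) atTop
        (𝓝 (u x + ⟪p, z - x⟫)) :=
      (hScont.tendsto.comp hxsx).add (hgr.inner (tendsto_const_nhds.sub hxsx))
    exact le_of_tendsto h1 (Eventually.of_forall hk)
  have hconv : Convex ℝ (subdiffOn Ω u x) := by
    intro p hp q hq a b ha hb hab z hz
    have h1 := hp z hz
    have h2 := hq z hz
    have : (inner ℝ (a • p + b • q) (z - x) : ℝ)
        = a * ⟪p, z - x⟫ + b * ⟪q, z - x⟫ := by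
      rw [inner_add_left, real_inner_smul_left, real_inner_smul_left]
    rw [this]
    have hb' : b = 1 - a := by linarith
    subst hb'
    nlinarith [mul_le_mul_of_nonneg_left h1 ha, mul_le_mul_of_nonneg_left h2 hb]
  -- Lipschitz setup
  obtain ⟨K, t, ht, hK⟩ := (hu.locallyLipschitzOn hΩo) hx
  rw [hΩo.nhdsWithin_eq hx] at ht
  obtain ⟨r₀, hr₀, hball₀⟩ := Metric.mem_nhds_iff.1 (Filter.inter_mem ht (hΩo.mem_nhds hx))
  set r : ℝ := r₀ / 3 with hr_def
  have hr : 0 < r := by positivity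
  set Kr : ℝ := (K : ℝ) with hKr_def
  have hKr : 0 ≤ Kr := K.coe_nonneg
  have hball : Metric.ball x (3*r) ⊆ Ω := by
    intro w hw
    exact (hball₀ (by simpa [hr_def, mul_div_cancel₀] using hw)).2
  have hballt : Metric.ball x (3*r) ⊆ t := by
    intro w hw
    exact (hball₀ (by simpa [hr_def, mul_div_cancel₀] using hw)).1
  have hdist : ∀ a ∈ Metric.ball x (3*r), ∀ b ∈ Metric.ball x (3*r),
      dist (u a) (u b) ≤ Kr * dist a b := by
    intro a ha b hb
    exact hK.dist_le_mul a (hballt ha) b (hballt hb)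
  have hgs : ∀ ⦃y⦄, y ∈ Ω → DifferentiableAt ℝ u y → ∀ ⦃z⦄, z ∈ Ω →
      u y + ⟪gradient u y, z - y⟫ ≤ u z := fun y hy hd z hz =>
    grad_mem_subdiff' hΩc hu hy hd hz
  have hgb := grad_norm_le' hr hKr hball hdist hgs
  have hxball : x ∈ Metric.ball x (3*r) := by simp [Metric.mem_ball]; linarith
  -- membership criterion for S
  have hmemS : ∀ p' : EuclideanSpace ℝ (Fin n),
      (∀ ε > (0:ℝ), ∃ w, (w ∈ Ω ∧ DifferentiableAt ℝ u w) ∧ dist w x < ε ∧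
        dist (gradient u w) p' < ε) → p' ∈ S := by
    intro p' h
    choose w hw h1 h2 using fun m : ℕ => h (1/((m:ℝ)+1)) (by positivity)
    refine ⟨w, hw, ?_, ?_⟩
    · rw [tendsto_iff_dist_tendsto_zero]
      exact squeeze_zero (fun m => dist_nonneg) (fun m => (h1 m).le)
        (by simpa using tendsto_aux' 1)
    · rw [tendsto_iff_dist_tendsto_zero]
      exact squeeze_zero (fun m => dist_nonneg) (fun m => (h2 m).le)
        (by simpa using tendsto_aux' 1)
  -- density of differentiability points near x
  have hdense : ∀ (c : EuclideanSpace ℝ (Fin n)) (ρ : ℝ), 0 < ρ → Metric.ball c ρ ⊆ Ω →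
      ∃ w, (w ∈ Ω ∧ DifferentiableAt ℝ u w) ∧ dist w c < ρ := by
    intro c ρ hρ hsub
    by_contra hcon
    push_neg at hcon
    have hbad : Metric.ball c ρ ⊆ {w | ¬ (w ∈ Ω → DifferentiableAt ℝ u w)} := by
      intro w hw
      have hwΩ : w ∈ Ω := hsub hw
      have hwd : ¬ DifferentiableAt ℝ u w := by
        intro hd
        exact absurd (by simpa [Metric.mem_ball] using hw) (by
          simpa using hcon w ⟨hwΩ, hd⟩)
      simp [hwΩ, hwd]
    have h0 : volume {w | ¬ (w ∈ Ω → DifferentiableAt ℝ u w)} = 0 := by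
      simpa [ae_iff] using hdiff
    have := measure_mono_null hbad h0
    exact absurd this (Metric.measure_ball_pos volume c hρ).ne'
  -- main claim: for any direction e, some limiting gradient q has ⟪p,e⟫ ≤ ⟪q,e⟫
  have hclaim : ∀ (e : EuclideanSpace ℝ (Fin n)), ‖e‖ ≤ 1 →
      ∀ p ∈ subdiffOn Ω u x, ∃ q ∈ S, ⟪p, e⟫ ≤ ⟪q, e⟫ := by
    intro e he p hp
    have hk1 : ∀ k : ℕ, (1:ℝ) ≤ (k:ℝ) + 1 := fun k => by
      have := Nat.cast_nonneg (α := ℝ) k; linarith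
    have hsel : ∀ k : ℕ, ∃ w, (w ∈ Ω ∧ DifferentiableAt ℝ u w) ∧
        dist w (x + (r/((k:ℝ)+1)) • e) < (r/((k:ℝ)+1))/((k:ℝ)+1) := by
      intro k
      set tk : ℝ := r/((k:ℝ)+1) with htk
      have htkpos : 0 < tk := by positivity
      have htkr : tk ≤ r := by
        rw [htk]; apply div_le_self hr.le; exact hk1 k
      have hcx : dist (x + tk • e) x ≤ tk := by
        rw [dist_eq_norm, add_sub_cancel_left, norm_smul, Real.norm_eq_abs,
          abs_of_pos htkpos]
        nlinarith
      apply hdense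
      · positivity
      · intro w hw
        apply hball
        have h1 := dist_triangle w (x + tk • e) x
        have h2 : dist w (x + tk • e) < tk/((k:ℝ)+1) := by
          simpa [Metric.mem_ball] using hw
        have h3 : tk/((k:ℝ)+1) ≤ tk := div_le_self htkpos.le (hk1 k)
        simp only [Metric.mem_ball]
        calc dist w x ≤ dist w (x + tk • e) + dist (x + tk • e) x := h1
          _ < tk/((k:ℝ)+1) + tk := by linarith
          _ ≤ r + r := by linarith
          _ < 3*r := by linarith
    choose y hy hy2 using hsel
    have hyball : ∀ k, y k ∈ Metric.ball x (2*r) := by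
      intro k
      set tk : ℝ := r/((k:ℝ)+1) with htk
      have htkpos : 0 < tk := by positivity
      have htkr : tk ≤ r := div_le_self hr.le (hk1 k)
      have hcx : dist (x + tk • e) x ≤ tk := by
        rw [dist_eq_norm, add_sub_cancel_left, norm_smul, Real.norm_eq_abs,
          abs_of_pos htkpos]
        nlinarith
      have h3 : tk/((k:ℝ)+1) ≤ tk := div_le_self htkpos.le (hk1 k)
      have h1 := dist_triangle (y k) (x + tk • e) x
      have h2 := hy2 k
      simp only [Metric.mem_ball]
      calc dist (y k) x ≤ dist (y k) (x + tk • e) + dist (x + tk • e) x := h1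
        _ < tk/((k:ℝ)+1) + tk := by exact add_lt_add_of_lt_of_le h2 hcx
        _ ≤ 2*r := by linarith
    have hgbk : ∀ k, ‖gradient u (y k)‖ ≤ Kr := fun k => hgb _ (hyball k) (hy k).2
    have hkey : ∀ k : ℕ, ⟪p, e⟫ - 2*Kr/((k:ℝ)+1) ≤ ⟪gradient u (y k), e⟫ := by
      intro k
      set tk : ℝ := r/((k:ℝ)+1) with htk
      set g : EuclideanSpace ℝ (Fin n) := gradient u (y k) with hg
      have htkpos : 0 < tk := by positivity
      have htkr : tk ≤ r := div_le_self hr.le (hk1 k)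
      have hxe : x + tk • e ∈ Metric.ball x (3*r) := by
        have hcx : dist (x + tk • e) x ≤ tk := by
          rw [dist_eq_norm, add_sub_cancel_left, norm_smul, Real.norm_eq_abs,
            abs_of_pos htkpos]
          nlinarith
        simp only [Metric.mem_ball]
        linarith
      have ha := hgs (hy k).1 (hy k).2 hx
      have hb := hp (x + tk • e) (hball hxe)
      have hb' : u x + tk * ⟪p, e⟫ ≤ u (x + tk • e) := by
        have : (inner ℝ p ((x + tk • e) - x) : ℝ) = tk * ⟪p, e⟫ := by
          rw [add_sub_cancel_left, real_inner_smul_right]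
        rw [this] at hb
        exact hb
      have hc : |u (y k) - u (x + tk • e)| ≤ Kr * (tk/((k:ℝ)+1)) := by
        have hd3 := hdist _ (Metric.ball_subset_ball (by linarith) (hyball k)) _ hxe
        have h2 : dist (y k) (x + tk • e) < tk/((k:ℝ)+1) := hy2 k
        have := mul_le_mul_of_nonneg_left h2.le hKr
        rw [Real.dist_eq] at hd3
        linarith
      have hsplit : ⟪g, y k - x⟫ = ⟪g, y k - (x + tk • e)⟫ + tk * ⟪g, e⟫ := by
        rw [← real_inner_smul_right, ← inner_add_right]
        congr 1
        module
      have hflip : ⟪g, x - y k⟫ = -⟪g, y k - x⟫ := by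
        rw [← neg_sub, inner_neg_right]
      have habs : |⟪g, y k - (x + tk • e)⟫| ≤ Kr * (tk/((k:ℝ)+1)) := by
        calc |⟪g, y k - (x + tk • e)⟫| ≤ ‖g‖ * ‖y k - (x + tk • e)‖ :=
            abs_real_inner_le_norm _ _
          _ ≤ Kr * (tk/((k:ℝ)+1)) := by
            apply mul_le_mul (hgbk k) _ (norm_nonneg _) hKr
            rw [← dist_eq_norm]
            exact (hy2 k).le
      have habs1 := abs_le.1 habs
      have hcc := abs_le.1 hc
      rw [hflip, hsplit] at ha
      have hcombine : tk * ⟪p, e⟫ - 2*(Kr * (tk/((k:ℝ)+1))) ≤ tk * ⟪g, e⟫ := by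
        linarith
      have hfin : tk * (⟪p, e⟫ - 2*Kr/((k:ℝ)+1)) ≤ tk * ⟪g, e⟫ := by
        have hre : tk * (⟪p, e⟫ - 2*Kr/((k:ℝ)+1))
            = tk * ⟪p, e⟫ - 2*(Kr * (tk/((k:ℝ)+1))) := by
          field_simp
        rw [hre]
        exact hcombine
      exact le_of_mul_le_mul_left hfin htkpos
    obtain ⟨q, hqmem, φ, hφ, hφt⟩ :=
      (isCompact_closedBall (0 : EuclideanSpace ℝ (Fin n)) Kr).tendsto_subseq
        (x := fun k => gradient u (y k))
        (fun k => by simpa [Metric.mem_closedBall, dist_zero_right] using hgbk k)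
    have hyx : Tendsto y atTop (𝓝 x) := by
      rw [tendsto_iff_dist_tendsto_zero]
      apply squeeze_zero (fun k => dist_nonneg) (fun k => ?_) (tendsto_aux' (2*r))
      set tk : ℝ := r/((k:ℝ)+1) with htk
      have htkpos : 0 < tk := by positivity
      have hcx : dist (x + tk • e) x ≤ tk := by
        rw [dist_eq_norm, add_sub_cancel_left, norm_smul, Real.norm_eq_abs,
          abs_of_pos htkpos]
        nlinarith
      have h3 : tk/((k:ℝ)+1) ≤ tk := div_le_self htkpos.le (hk1 k)
      have h2 := hy2 k
      have h1 := dist_triangle (y k) (x + tk • e) x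
      have : 2*r/((k:ℝ)+1) = tk + tk := by rw [htk]; ring
      rw [this]
      linarith
    refine ⟨q, ⟨y ∘ φ, fun k => hy (φ k), hyx.comp hφ.tendsto_atTop, hφt⟩, ?_⟩
    have hL : Tendsto (fun k => ⟪p, e⟫ - 2*Kr/((φ k : ℝ)+1)) atTop (𝓝 (⟪p, e⟫)) := by
      have h0 : Tendsto (fun k : ℕ => 2*Kr/((φ k : ℝ)+1)) atTop (𝓝 0) :=
        (tendsto_aux' (2*Kr)).comp hφ.tendsto_atTop
      have h1 : Tendsto (fun k : ℕ => ⟪p, e⟫ - 2*Kr/((φ k : ℝ)+1)) atTop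
          (𝓝 (⟪p, e⟫ - 0)) := tendsto_const_nhds.sub h0
      simpa using h1
    have hR : Tendsto (fun k => ⟪gradient u (y (φ k)), e⟫) atTop (𝓝 (⟪q, e⟫)) :=
      hφt.inner tendsto_const_nhds
    exact le_of_tendsto_of_tendsto' hL hR (fun k => hkey (φ k))
  -- S is compact
  have hSbdd : S ⊆ Metric.closedBall 0 Kr := by
    rintro p' ⟨xs, hxs, hxsx, hgr⟩
    rw [Metric.mem_closedBall, dist_zero_right]
    have hev : ∀ᶠ k in atTop, ‖gradient u (xs k)‖ ≤ Kr := by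
      filter_upwards [hxsx (Metric.ball_mem_nhds x (by linarith : (0:ℝ) < 2*r))] with k hk
      exact hgb _ hk (hxs k).2
    exact le_of_tendsto hgr.norm hev
  have hSclosed : IsClosed S := by
    refine IsSeqClosed.isClosed ?_
    intro ps p' hps hlim
    apply hmemS
    intro ε hε
    obtain ⟨N, hN⟩ := Metric.tendsto_atTop.1 hlim (ε/2) (by linarith)
    have hm := hN N le_rfl
    set m := N
    obtain ⟨xs, hxs, hxsx, hgr⟩ := hps m
    have h1 := Metric.tendsto_atTop.1 hxsx (ε/2) (by linarith)
    have h2 := Metric.tendsto_atTop.1 hgr (ε/2) (by linarith)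
    obtain ⟨N1, hN1⟩ := h1
    obtain ⟨N2, hN2⟩ := h2
    have hk1 := hN1 (max N1 N2) (le_max_left _ _)
    have hk2 := hN2 (max N1 N2) (le_max_right _ _)
    set k := max N1 N2
    exact ⟨xs k, hxs k, by linarith [hk1], by
      calc dist (gradient u (xs k)) p' ≤ dist (gradient u (xs k)) (ps m) + dist (ps m) p' :=
        dist_triangle _ _ _
      _ < ε := by linarith⟩
  have hScompact : IsCompact S :=
    (Metric.isCompact_of_isClosed_isBounded hSclosed
      (Metric.isBounded_closedBall.subset hSbdd))
  have hHullCompact : IsCompact (convexHull ℝ S) := isCompact_convexHull'' hScompact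
  -- conclude
  apply Subset.antisymm
  · intro p hp
    by_contra hpnot
    obtain ⟨f, c, hfc, hcp⟩ :=
      geometric_hahn_banach_closed_point (convex_convexHull ℝ S) hHullCompact.isClosed hpnot
    set v : EuclideanSpace ℝ (Fin n) := (InnerProductSpace.toDual ℝ _).symm f with hv_def
    have hfv : ∀ w, f w = ⟪v, w⟫ := by
      intro w
      rw [hv_def, InnerProductSpace.toDual_symm_apply]
    rcases eq_or_ne v 0 with h0 | h0
    · obtain ⟨q, hq, -⟩ := hclaim 0 (by simp) p hp
      have h1 := hfc q (subset_convexHull ℝ S hq)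
      rw [hfv, h0] at h1 hcp
      simp at h1 hcp
      linarith
    · have hvn : 0 < ‖v‖ := norm_pos_iff.2 h0
      obtain ⟨q, hq, hqe⟩ := hclaim (‖v‖⁻¹ • v) (by
        rw [norm_smul, norm_inv, Real.norm_eq_abs, abs_of_pos hvn]
        rw [inv_mul_cancel₀ hvn.ne']) p hp
      have h1 := hfc q (subset_convexHull ℝ S hq)
      rw [hfv] at h1 hcp
      have h2 : ⟪p, ‖v‖⁻¹ • v⟫ = ‖v‖⁻¹ * ⟪v, p⟫ := by
        rw [real_inner_smul_right, real_inner_comm]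
      have h3 : ⟪q, ‖v‖⁻¹ • v⟫ = ‖v‖⁻¹ * ⟪v, q⟫ := by
        rw [real_inner_smul_right, real_inner_comm]
      rw [h2, h3] at hqe
      have h4 : ⟪v, p⟫ ≤ ⟪v, q⟫ := by
        have := mul_le_mul_of_nonneg_left hqe (le_of_lt hvn)
        calc ⟪v, p⟫ = ‖v‖ * (‖v‖⁻¹ * ⟪v, p⟫) := by field_simp
        _ ≤ ‖v‖ * (‖v‖⁻¹ * ⟪v, q⟫) := this
        _ = ⟪v, q⟫ := by field_simp
      linarith
  · exact convexHull_min hSsub hconv
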